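/- Let h: (0,∞) → ℝ be defined for fixed ε > 0, γ ∈ (0,1), K > 0, and fixed functions a(s) (increasing with lim_{s→0⁺} a(s) = a₀). Suppose Φ(x) = inf_{0<s≤ε} (a(s) + K s² − K ε² − ε^γ log(s/ε)) satisfies Φ − a₀ ≤ C ε^γ. Then for any θ ∈ (0,1) with log(1/θ) > C + K, one has a(θε) − a₀ ≤ (C+K) ε^γ. -/
import Mathlib


/-- Dichotomy for the Kiselman–Legendre transform: if `a(s) + K s²` is increasing on `(0,ε]`
with limit `a₀` as `s → 0⁺`, and the infimum
`Φ = inf_{0<s≤ε} (a(s) + Ks² - Kε² - ε^γ log(s/ε))` satisfies `Φ - a₀ ≤ C ε^γ`, then for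
any `θ ∈ (0,1)` with `log(1/θ) > C + K`, one has `a(θε) - a₀ ≤ (C+K) ε^γ`. -/
theorem stmt16 (ε γ K C a₀ : ℝ) (a : ℝ → ℝ)
    (hε : 0 < ε) (hε1 : ε ≤ 1) (hγ0 : 0 < γ) (hγ1 : γ < 1) (hK : 0 < K)
    (hmono : MonotoneOn (fun s => a s + K * s ^ 2) (Set.Ioc 0 ε))
    (hlim : Filter.Tendsto (fun s => a s + K * s ^ 2)
      (nhdsWithin 0 (Set.Ioi 0)) (nhds a₀))
    (hΦ : sInf ((fun s => a s + K * s ^ 2 - K * ε ^ 2 - ε ^ γ * Real.log (s / ε)) ''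
        Set.Ioc 0 ε) - a₀ ≤ C * ε ^ γ)
    (θ : ℝ) (hθ0 : 0 < θ) (hθ1 : θ < 1) (hθ : C + K < Real.log (1 / θ)) :
    a (θ * ε) - a₀ ≤ (C + K) * ε ^ γ := by
  by_contra hcon
  push_neg at hcon
  have hεγpos : 0 < ε ^ γ := Real.rpow_pos_of_pos hε γ
  -- ε^2 ≤ ε^γ
  have hε2 : ε ^ 2 ≤ ε ^ γ := by
    have : ε ^ (2:ℝ) ≤ ε ^ γ :=
      Real.rpow_le_rpow_of_exponent_ge hε hε1 (by linarith)
    calc ε ^ 2 = ε ^ (2:ℝ) := by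
          rw [← Real.rpow_natCast ε 2]; norm_num
      _ ≤ ε ^ γ := this
  -- a(s) + K s² ≥ a₀ on (0, ε]
  have hbelow : ∀ s ∈ Set.Ioc (0:ℝ) ε, a₀ ≤ a s + K * s ^ 2 := by
    intro s hs
    refine le_of_tendsto hlim ?_
    filter_upwards [Ioc_mem_nhdsGT_of_mem (Set.mem_Ico.mpr ⟨le_refl 0, hs.1⟩)] with t ht
    exact hmono ⟨ht.1, ht.2.trans hs.2⟩ hs ht.2
  set δ : ℝ := min (ε ^ γ * (Real.log (1/θ) - (C + K)))
      (a (θ * ε) - a₀ - (C + K) * ε ^ γ) with hδdef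
  have hδpos : 0 < δ := lt_min (by nlinarith) (by linarith)
  have hθε : θ * ε ∈ Set.Ioc (0:ℝ) ε := ⟨by positivity, by nlinarith⟩
  have hlogθ : Real.log (1/θ) = - Real.log θ := by rw [one_div, Real.log_inv]
  have key : ∀ x ∈ ((fun s => a s + K * s ^ 2 - K * ε ^ 2 - ε ^ γ * Real.log (s / ε)) ''
      Set.Ioc 0 ε), a₀ + C * ε ^ γ + δ ≤ x := by
    rintro x ⟨s, hs, rfl⟩
    rcases le_or_gt s (θ * ε) with hcase | hcase
    · -- small s: log term dominates
      have hlog : Real.log (s / ε) ≤ Real.log θ := by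
        apply Real.log_le_log (div_pos hs.1 hε)
        rw [div_le_iff₀ hε]; linarith
      have h1 : a₀ ≤ a s + K * s ^ 2 := hbelow s hs
      have h2 : δ ≤ ε ^ γ * (Real.log (1/θ) - (C + K)) := min_le_left _ _
      have h3 : ε ^ γ * Real.log (s / ε) ≤ ε ^ γ * Real.log θ :=
        mul_le_mul_of_nonneg_left hlog (le_of_lt hεγpos)
      have h4 : K * ε ^ 2 ≤ K * ε ^ γ := mul_le_mul_of_nonneg_left hε2 (le_of_lt hK)
      simp only
      nlinarith [hεγpos]
    · -- large s: monotonicity gives a(θε) bound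
      have h1 : a (θ * ε) + K * (θ * ε) ^ 2 ≤ a s + K * s ^ 2 :=
        hmono hθε hs (le_of_lt hcase)
      have h2 : δ ≤ a (θ * ε) - a₀ - (C + K) * ε ^ γ := min_le_right _ _
      have h3 : Real.log (s / ε) ≤ 0 := by
        apply Real.log_nonpos (le_of_lt (div_pos hs.1 hε))
        rw [div_le_one hε]; exact hs.2
      have h4 : K * ε ^ 2 ≤ K * ε ^ γ := mul_le_mul_of_nonneg_left hε2 (le_of_lt hK)
      have h5 : ε ^ γ * Real.log (s / ε) ≤ 0 :=
        mul_nonpos_of_nonneg_of_nonpos (le_of_lt hεγpos) h3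
      simp only
      nlinarith [sq_nonneg (θ * ε)]
  have hne : ((fun s => a s + K * s ^ 2 - K * ε ^ 2 - ε ^ γ * Real.log (s / ε)) ''
      Set.Ioc 0 ε).Nonempty := ⟨_, Set.mem_image_of_mem _ hθε⟩
  have := le_csInf hne key
  linarith
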